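/- Let K be an odd positive integer, ε ≥ 0, Δ ∈ [0,1), m ≥ 0 a real number, and δ ∈ [0,1). Let γ : {0,…,K} → [0,1] satisfy γ(l) = γ(K−l) for all l. For p = (p_1,…,p_K) ∈ [0,1]^K let α_l(p) = Σ_{A ⊆ {1,…,K}, |A| = l} Π_{i∈A} p_i · Π_{j∉A} (1−p_j), and let P_γ(p) = Σ_{l=0}^{K} ( γ(l)·1{l ≥ (K+1)/2} + (1−γ(l))/2 ) · α_l(p). Then the following are equivalent: (i) for all p, p' ∈ [0,1]^K with (p_i, p_i') ∈ F(ε,Δ) for every i, both P_γ(p) ≤ e^{mε} P_γ(p') + δ and 1 − P_γ(p) ≤ e^{mε} (1 − P_γ(p')) + δ; (ii) for all p, p' ∈ [0,1]^K with (p_i, p_i') ∈ F(ε,Δ) for every i, f(p, p'; γ) := Σ_{l=0}^{(K−1)/2} ( e^{mε} α_l(p') − α_l(p) ) γ(l) + Σ_{l=(K+1)/2}^{K} ( α_l(p) − e^{mε} α_l(p') ) γ(l) ≤ e^{mε} − 1 + 2δ. -/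

import Mathlib

open Finset

/-- Poisson–Binomial probability mass at `l` for parameters `p : Fin K → ℝ`. -/
noncomputable def alphaPB (K : ℕ) (p : Fin K → ℝ) (l : ℕ) : ℝ :=
  ∑ A ∈ Finset.powersetCard l (Finset.univ : Finset (Fin K)),
    (∏ i ∈ A, p i) * ∏ j ∈ Aᶜ, (1 - p j)

/-- The feasible region `F(ε,Δ)`: pairs `(p,p') ∈ [0,1]²` consistent with
`(ε,Δ)`-differential privacy. -/
def Feas (ε Δ p p' : ℝ) : Prop :=
  0 ≤ p ∧ p ≤ 1 ∧ 0 ≤ p' ∧ p' ≤ 1 ∧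
  p ≤ Real.exp ε * p' + Δ ∧ p' ≤ Real.exp ε * p + Δ ∧
  1 - p ≤ Real.exp ε * (1 - p') + Δ ∧ 1 - p' ≤ Real.exp ε * (1 - p) + Δ

/-- Probability that DaRRM with noise function `γ` outputs 1 when the sum of the
`K` binary outcomes is Poisson–Binomial with parameters `p`. -/
noncomputable def Pout (K : ℕ) (γ : ℕ → ℝ) (p : Fin K → ℝ) : ℝ :=
  ∑ l ∈ Finset.range (K + 1),
    (γ l * (if (K + 1) / 2 ≤ l then (1 : ℝ) else 0) + (1 - γ l) / 2) * alphaPB K p l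

/-- The privacy cost objective `f(p, p'; γ)`. -/
noncomputable def privCost (K : ℕ) (m ε : ℝ) (γ : ℕ → ℝ) (p p' : Fin K → ℝ) : ℝ :=
  (∑ l ∈ Finset.range ((K + 1) / 2),
      (Real.exp (m * ε) * alphaPB K p' l - alphaPB K p l) * γ l)
  + ∑ l ∈ Finset.Icc ((K + 1) / 2) K,
      (alphaPB K p l - Real.exp (m * ε) * alphaPB K p' l) * γ l

/-- The Poisson-Binomial masses sum to 1 (as a polynomial identity). -/
lemma alphaPB_sum_eq_one (K : ℕ) (p : Fin K → ℝ) :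
    ∑ l ∈ Finset.range (K + 1), alphaPB K p l = 1 := by
  have h := Finset.prod_add p (fun i => 1 - p i) (Finset.univ : Finset (Fin K))
  simp only [add_sub_cancel, Finset.prod_const_one] at h
  rw [Finset.sum_powerset, Finset.card_univ,
    Fintype.card_fin] at h
  unfold alphaPB
  refine Eq.trans (Finset.sum_congr rfl ?_) h.symm
  intro l _
  apply Finset.sum_congr rfl
  intro A _
  rw [Finset.compl_eq_univ_sdiff]

/-- Complement symmetry: `α_l(1-p) = α_{K-l}(p)` for `l ≤ K`. -/
lemma alphaPB_compl (K : ℕ) (p : Fin K → ℝ) {l : ℕ} (hl : l ≤ K) :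
    alphaPB K (fun i => 1 - p i) l = alphaPB K p (K - l) := by
  unfold alphaPB
  refine Finset.sum_nbij' (fun A => Aᶜ) (fun B => Bᶜ) ?_ ?_ ?_ ?_ ?_
  · intro A hA
    rw [Finset.mem_powersetCard] at hA ⊢
    exact ⟨Finset.subset_univ _, by rw [Finset.card_compl, Fintype.card_fin, hA.2]⟩
  · intro B hB
    rw [Finset.mem_powersetCard] at hB ⊢
    refine ⟨Finset.subset_univ _, ?_⟩
    rw [Finset.card_compl, Fintype.card_fin, hB.2]
    omega
  · intro A _; simp
  · intro B _; simp
  · intro A _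
    show (∏ i ∈ A, (1 - p i)) * ∏ j ∈ Aᶜ, (1 - (1 - p j))
        = (∏ i ∈ Aᶜ, p i) * ∏ j ∈ Aᶜᶜ, (1 - p j)
    rw [compl_compl, mul_comm]
    congr 1
    exact Finset.prod_congr rfl fun j _ => by ring

/-- Reindexing `l ↦ K - l` between the lower and upper halves. -/
lemma sum_reflect_half (K : ℕ) (hK : Odd K) (F : ℕ → ℝ) :
    ∑ l ∈ Finset.range ((K + 1) / 2), F (K - l)
      = ∑ l ∈ Finset.Icc ((K + 1) / 2) K, F l := by
  obtain ⟨t, rfl⟩ := hK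
  refine Finset.sum_nbij' (fun l => 2 * t + 1 - l) (fun l => 2 * t + 1 - l) ?_ ?_ ?_ ?_ ?_
  · intro l hl; simp only [Finset.mem_range] at hl; simp only [Finset.mem_Icc]; omega
  · intro l hl; simp only [Finset.mem_Icc] at hl; simp only [Finset.mem_range]; omega
  · intro l hl; simp only [Finset.mem_range] at hl
    show 2 * t + 1 - (2 * t + 1 - l) = l; omega
  · intro l hl; simp only [Finset.mem_Icc] at hl
    show 2 * t + 1 - (2 * t + 1 - l) = l; omega
  · intro l _; rfl

lemma feas_compl {ε Δ p p' : ℝ} (h : Feas ε Δ p p') : Feas ε Δ (1 - p) (1 - p') := by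
  obtain ⟨h1, h2, h3, h4, h5, h6, h7, h8⟩ := h
  have e1 : (1:ℝ) - (1 - p) = p := by ring
  have e2 : (1:ℝ) - (1 - p') = p' := by ring
  exact ⟨by linarith, by linarith, by linarith, by linarith, h7, h8,
    by rw [e1, e2]; exact h5, by rw [e1, e2]; exact h6⟩

lemma pout_split (K : ℕ) (γ : ℕ → ℝ) (q : Fin K → ℝ) :
    Pout K γ q =
      (∑ l ∈ Finset.range ((K + 1) / 2), ((1 - γ l) / 2) * alphaPB K q l)
      + ∑ l ∈ Finset.Icc ((K + 1) / 2) K, ((1 + γ l) / 2) * alphaPB K q l := by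
  have hle : (K + 1) / 2 ≤ K + 1 := by omega
  unfold Pout
  rw [Finset.range_eq_Ico, ← Finset.sum_Ico_consecutive _ (Nat.zero_le _) hle,
    ← Finset.range_eq_Ico, Finset.Ico_add_one_right_eq_Icc]
  congr 1
  · refine Finset.sum_congr rfl (fun l hl => ?_)
    rw [Finset.mem_range] at hl
    rw [if_neg (by omega)]; ring
  · refine Finset.sum_congr rfl (fun l hl => ?_)
    rw [Finset.mem_Icc] at hl
    rw [if_pos hl.1]; ring

lemma range_split (K : ℕ) (f : ℕ → ℝ) :
    ∑ l ∈ Finset.range (K + 1), f l =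
      (∑ l ∈ Finset.range ((K + 1) / 2), f l) + ∑ l ∈ Finset.Icc ((K + 1) / 2) K, f l := by
  have hle : (K + 1) / 2 ≤ K + 1 := by omega
  rw [Finset.range_eq_Ico, ← Finset.sum_Ico_consecutive _ (Nat.zero_le _) hle,
    ← Finset.range_eq_Ico, Finset.Ico_add_one_right_eq_Icc]

/-- Key identity: `2(P(p) - e^{mε} P(p')) = (1 - e^{mε}) + f(p,p')`. -/
lemma key_identity (K : ℕ) (m ε : ℝ) (γ : ℕ → ℝ) (p p' : Fin K → ℝ) :
    2 * Pout K γ p - 2 * Real.exp (m * ε) * Pout K γ p'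
      = (1 - Real.exp (m * ε)) + privCost K m ε γ p p' := by
  set E := Real.exp (m * ε) with hE
  have comb : ∀ (s : Finset ℕ) (f g r h : ℕ → ℝ),
      (∀ l ∈ s, 2 * f l - 2 * E * g l - r l = h l) →
      2 * (∑ l ∈ s, f l) - 2 * E * (∑ l ∈ s, g l) - (∑ l ∈ s, r l) = ∑ l ∈ s, h l := by
    intro s f g r h hh
    rw [Finset.mul_sum, Finset.mul_sum, ← Finset.sum_sub_distrib, ← Finset.sum_sub_distrib]
    exact Finset.sum_congr rfl hh
  have C1 := comb (Finset.range ((K + 1) / 2))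
    (fun l => ((1 - γ l) / 2) * alphaPB K p l)
    (fun l => ((1 - γ l) / 2) * alphaPB K p' l)
    (fun l => (E * alphaPB K p' l - alphaPB K p l) * γ l)
    (fun l => alphaPB K p l - E * alphaPB K p' l)
    (fun l _ => by ring)
  have C2 := comb (Finset.Icc ((K + 1) / 2) K)
    (fun l => ((1 + γ l) / 2) * alphaPB K p l)
    (fun l => ((1 + γ l) / 2) * alphaPB K p' l)
    (fun l => (alphaPB K p l - E * alphaPB K p' l) * γ l)
    (fun l => alphaPB K p l - E * alphaPB K p' l)
    (fun l _ => by ring)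
  have hsum : (∑ l ∈ Finset.range ((K + 1) / 2), (alphaPB K p l - E * alphaPB K p' l))
      + ∑ l ∈ Finset.Icc ((K + 1) / 2) K, (alphaPB K p l - E * alphaPB K p' l)
      = 1 - E := by
    rw [← range_split K (fun l => alphaPB K p l - E * alphaPB K p' l),
      Finset.sum_sub_distrib, ← Finset.mul_sum, alphaPB_sum_eq_one, alphaPB_sum_eq_one, mul_one]
  rw [pout_split K γ p, pout_split K γ p']
  unfold privCost
  rw [← hE]
  linarith [C1, C2, hsum]

/-- Antisymmetry of the privacy cost under complementation. -/
lemma privCost_compl (K : ℕ) (hK : Odd K) (m ε : ℝ) (γ : ℕ → ℝ)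
    (hγsym : ∀ l ≤ K, γ l = γ (K - l)) (p p' : Fin K → ℝ) :
    privCost K m ε γ (fun i => 1 - p i) (fun i => 1 - p' i) = - privCost K m ε γ p p' := by
  set E := Real.exp (m * ε) with hE
  unfold privCost
  rw [← hE]
  have h1 : ∑ l ∈ Finset.range ((K + 1) / 2),
      (E * alphaPB K (fun i => 1 - p' i) l - alphaPB K (fun i => 1 - p i) l) * γ l
      = ∑ l ∈ Finset.Icc ((K + 1) / 2) K, (E * alphaPB K p' l - alphaPB K p l) * γ l := by
    rw [← sum_reflect_half K hK (fun l => (E * alphaPB K p' l - alphaPB K p l) * γ l)]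
    refine Finset.sum_congr rfl (fun l hl => ?_)
    rw [Finset.mem_range] at hl
    have hlK : l ≤ K := by omega
    rw [alphaPB_compl K p' hlK, alphaPB_compl K p hlK, hγsym l hlK]
  have h2 : ∑ l ∈ Finset.Icc ((K + 1) / 2) K,
      (alphaPB K (fun i => 1 - p i) l - E * alphaPB K (fun i => 1 - p' i) l) * γ l
      = ∑ l ∈ Finset.range ((K + 1) / 2), (alphaPB K p l - E * alphaPB K p' l) * γ l := by
    rw [← sum_reflect_half K hK (fun l =>
      (alphaPB K (fun i => 1 - p i) l - E * alphaPB K (fun i => 1 - p' i) l) * γ l)]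
    refine Finset.sum_congr rfl (fun l hl => ?_)
    rw [Finset.mem_range] at hl
    have hlK : K - l ≤ K := by omega
    have hKK : K - (K - l) = l := by omega
    rw [alphaPB_compl K p hlK, alphaPB_compl K p' hlK, hKK, hγsym (K - l) hlK, hKK]
  have h3 : (∑ l ∈ Finset.Icc ((K + 1) / 2) K, (E * alphaPB K p' l - alphaPB K p l) * γ l)
      + ∑ l ∈ Finset.Icc ((K + 1) / 2) K, (alphaPB K p l - E * alphaPB K p' l) * γ l = 0 := by
    rw [← Finset.sum_add_distrib]
    exact Finset.sum_eq_zero fun l _ => by ring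
  have h4 : (∑ l ∈ Finset.range ((K + 1) / 2), (alphaPB K p l - E * alphaPB K p' l) * γ l)
      + ∑ l ∈ Finset.range ((K + 1) / 2), (E * alphaPB K p' l - alphaPB K p l) * γ l = 0 := by
    rw [← Finset.sum_add_distrib]
    exact Finset.sum_eq_zero fun l _ => by ring
  linarith [h1, h2, h3, h4]

theorem statement3 (K : ℕ) (hK : Odd K) (hKpos : 0 < K)
    (ε Δ m δ : ℝ) (hε : 0 ≤ ε) (hΔ0 : 0 ≤ Δ) (hΔ1 : Δ < 1) (hm : 0 ≤ m)
    (hδ0 : 0 ≤ δ) (hδ1 : δ < 1)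
    (γ : ℕ → ℝ) (hγ01 : ∀ l ≤ K, 0 ≤ γ l ∧ γ l ≤ 1)
    (hγsym : ∀ l ≤ K, γ l = γ (K - l)) :
    (∀ p p' : Fin K → ℝ, (∀ i, Feas ε Δ (p i) (p' i)) →
        Pout K γ p ≤ Real.exp (m * ε) * Pout K γ p' + δ ∧
        1 - Pout K γ p ≤ Real.exp (m * ε) * (1 - Pout K γ p') + δ)
    ↔ (∀ p p' : Fin K → ℝ, (∀ i, Feas ε Δ (p i) (p' i)) →
        privCost K m ε γ p p' ≤ Real.exp (m * ε) - 1 + 2 * δ) := by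
  constructor
  · intro h p p' hf
    obtain ⟨h1, _⟩ := h p p' hf
    have hk := key_identity K m ε γ p p'
    linarith
  · intro h p p' hf
    have h1 := h p p' hf
    have h2 := h (fun i => 1 - p i) (fun i => 1 - p' i) (fun i => feas_compl (hf i))
    rw [privCost_compl K hK m ε γ hγsym p p'] at h2
    have hk := key_identity K m ε γ p p'
    have hexp : Real.exp (m * ε) * (1 - Pout K γ p')
        = Real.exp (m * ε) - Real.exp (m * ε) * Pout K γ p' := by ring
    exact ⟨by linarith, by linarith⟩
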